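/- Let a, b ∈ ℂ*. The H₄-module M_{(a,b)} = ℂ[s] (with p·x = x(s-1)a, q·x = x(s+1)b, r·x = 0, s·x = s·x(s)) is irreducible. -/

import Mathlib

open Polynomial

lemma delta_ne_zero (x : Polynomial ℂ) (hx : x ≠ 0) (hd : 0 < x.natDegree) :
    x.comp (X + C 1) - x ≠ 0 := by
  intro h
  have heq : x.comp (X + C 1) = x := by rwa [sub_eq_zero] at h
  have hper : ∀ t : ℂ, x.eval (t + 1) = x.eval t := by
    intro t
    have := congrArg (eval t) heq
    simpa [eval_comp] using this
  obtain ⟨r, hr⟩ := Complex.exists_root (show 0 < x.degree by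
    rw [degree_eq_natDegree hx]; exact_mod_cast hd)
  have hroot : ∀ n : ℕ, x.IsRoot (r + n) := by
    intro n
    induction n with
    | zero => simpa using hr
    | succ k ih =>
      have := hper (r + k)
      simp only [IsRoot] at *
      rw [show (r + (k+1 : ℕ) : ℂ) = (r + k) + 1 by push_cast; ring, this]
      exact ih
  have hfin := Polynomial.finite_setOf_isRoot hx
  have hinf : {t : ℂ | x.IsRoot t}.Infinite := by
    refine Set.infinite_of_injective_forall_mem (f := fun n : ℕ => r + (n : ℂ)) ?_ ?_
    · intro m n h; field_simp at h; exact_mod_cast add_left_cancel h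
    · intro n; exact hroot n
  exact hinf hfin

lemma delta_deg_lt (x : Polynomial ℂ) (hx : x ≠ 0) (hd : 0 < x.natDegree) :
    (x.comp (X + C 1) - x).natDegree < x.natDegree := by
  have hq : (X + C 1 : Polynomial ℂ).natDegree = 1 := by
    simpa using natDegree_X_add_C (1 : ℂ)
  have hcompdeg : (x.comp (X + C 1)).natDegree = x.natDegree := by
    rw [natDegree_comp, hq, mul_one]
  have hlc : (x.comp (X + C 1)).leadingCoeff = x.leadingCoeff := by
    rw [leadingCoeff_comp (by rw [hq]; norm_num)]
    have : (X + C 1 : Polynomial ℂ).leadingCoeff = 1 := (monic_X_add_C (1:ℂ))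
    simp [this] at *
    simp [this]
  have hcomp0 : x.comp (X + C 1) ≠ 0 := by
    intro h
    rw [h, leadingCoeff_zero] at hlc
    exact hx (leadingCoeff_eq_zero.mp hlc.symm)
  have hdeg : (x.comp (X + C 1)).degree = x.degree := by
    rw [degree_eq_natDegree hcomp0, degree_eq_natDegree hx, hcompdeg]
  have hlt := degree_sub_lt hdeg hcomp0 hlc
  rw [hdeg] at hlt
  exact natDegree_lt_natDegree (delta_ne_zero x hx hd) hlt

/-- For a, b ∈ ℂ*, the H₄-module M_{(a,b)} = ℂ[s]
(p·x = x(s-1)a, q·x = x(s+1)b, r·x = 0, s·x = s·x(s)) is irreducible: every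
ℂ-subspace invariant under the actions is 0 or everything.  (r acts by 0.) -/
theorem stmt13 (a b : ℂ) (ha : a ≠ 0) (hb : b ≠ 0)
    (W : Submodule ℂ (Polynomial ℂ))
    (hP : ∀ x ∈ W,
      Polynomial.aeval (Polynomial.X - Polynomial.C 1 : Polynomial ℂ) x * Polynomial.C a ∈ W)
    (hQ : ∀ x ∈ W,
      Polynomial.aeval (Polynomial.X + Polynomial.C 1 : Polynomial ℂ) x * Polynomial.C b ∈ W)
    (hS : ∀ x ∈ W, Polynomial.X * x ∈ W) :
    W = ⊥ ∨ W = ⊤ := by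
  by_cases hW : W = ⊥
  · exact Or.inl hW
  right
  obtain ⟨x, hxW, hx0⟩ := (Submodule.ne_bot_iff W).mp hW
  have hshift : ∀ y ∈ W, y.comp (X + C 1) ∈ W := by
    intro y hy
    have h2 := W.smul_mem b⁻¹ (hQ y hy)
    have heq : b⁻¹ • (aeval (X + C 1) y * C b) = y.comp (X + C 1) := by
      rw [comp_eq_aeval, smul_eq_C_mul, mul_comm (aeval (X + C 1) y) (C b),
        ← mul_assoc, ← C_mul, inv_mul_cancel₀ hb, C_1, one_mul]
    rwa [heq] at h2
  have key : ∀ n : ℕ, ∀ y, y ∈ W → y ≠ 0 → y.natDegree ≤ n → (1 : Polynomial ℂ) ∈ W := by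
    intro n
    induction n with
    | zero =>
      intro y hyW hy0 hdeg
      obtain ⟨c, rfl⟩ : ∃ c, y = C c := ⟨_, eq_C_of_natDegree_le_zero hdeg⟩
      have hc : c ≠ 0 := fun h => hy0 (by rw [h, C_0])
      have := W.smul_mem c⁻¹ hyW
      rwa [smul_C, smul_eq_mul, inv_mul_cancel₀ hc, C_1] at this
    | succ n ih =>
      intro y hyW hy0 hdeg
      by_cases h0 : y.natDegree = 0
      · exact ih y hyW hy0 (by omega)
      · have hpos : 0 < y.natDegree := Nat.pos_of_ne_zero h0
        have hΔW : y.comp (X + C 1) - y ∈ W := W.sub_mem (hshift y hyW) hyW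
        exact ih _ hΔW (delta_ne_zero y hy0 hpos)
          (by have := delta_deg_lt y hy0 hpos; omega)
  have hone := key x.natDegree x hxW hx0 le_rfl
  have hXn : ∀ n : ℕ, (X : Polynomial ℂ) ^ n ∈ W := by
    intro n
    induction n with
    | zero => simpa using hone
    | succ k ih => rw [pow_succ, mul_comm]; exact hS _ ih
  rw [eq_top_iff]
  intro p _
  induction p using Polynomial.induction_on' with
  | add f g hf hg => exact W.add_mem (hf trivial) (hg trivial)
  | monomial n c =>
    rw [← C_mul_X_pow_eq_monomial, ← smul_eq_C_mul]
    exact W.smul_mem c (hXn n)
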